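/- Let $h, \gamma > 0$ with $h\gamma \le 1$, let $a \ge 1$, $\kappa, \kappa_B \ge 0$, let $l$ be a natural number, and let $Q_h, B$ and $M_s^k$ (for $s \in \mathbb{N}$, $1 \le k \le l$) be $d \times d$ real matrices satisfying $\|Q_h^j\| \le \kappa^2 (1-h\gamma)^j$ for all $j \ge 0$, $\|B\| \le \kappa_B$, and $\|M_s^k\| \le a(1-h\gamma)^{k-1}$ for all $s$ and all $1 \le k \le l$. Define $\Psi_{t,i} = Q_h^i\,\mathbf{1}_{i \le l} + h\sum_{j=0}^{l} Q_h^j B\, M_{t-j}^{\,i-j}\,\mathbf{1}_{1 \le i-j \le l}$. Then for every $t$ and every $i \ge 1$, $\|\Psi_{t,i}\| \le a\,(l h \kappa_B + 1)\,\kappa^2\,(1-h\gamma)^{i-1}$. -/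

import Mathlib

open scoped Matrix.Norms.L2Operator

/-- The transfer matrix `Ψ_{t,i}`: the coefficient of the estimated disturbance
`ŵ (t-i)` in the unrolled evolution of the state under the DAC policy.
`Ψ_{t,i} = Q^i 𝟙_{i ≤ l} + h ∑_{j=0}^{l} Q^j B M_{t-j}^{i-j} 𝟙_{1 ≤ i-j ≤ l}`. -/
noncomputable def Psi {d : ℕ} (Q B : Matrix (Fin d) (Fin d) ℝ) (h : ℝ)
    (M : ℕ → ℕ → Matrix (Fin d) (Fin d) ℝ) (l t i : ℕ) : Matrix (Fin d) (Fin d) ℝ :=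
  (if i ≤ l then Q ^ i else 0) +
    h • ∑ j ∈ Finset.range (l + 1),
      (if 1 ≤ i - j ∧ i - j ≤ l then Q ^ j * B * M (t - j) (i - j) else 0)

/-- Bound on the transfer matrices of the DAC policy:
`‖Ψ_{t,i}‖ ≤ a (l h κ_B + 1) κ² (1 - hγ)^(i-1)` for all `t` and all `i ≥ 1`. -/
theorem stmt3 {d : ℕ} (h γ a κ κB : ℝ) (hh : 0 < h) (hγpos : 0 < γ) (hhγ : h * γ ≤ 1)
    (ha : 1 ≤ a) (hκ : 0 ≤ κ) (hκB : 0 ≤ κB) (l : ℕ)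
    (Qh B : Matrix (Fin d) (Fin d) ℝ) (M : ℕ → ℕ → Matrix (Fin d) (Fin d) ℝ)
    (hQ : ∀ j : ℕ, ‖Qh ^ j‖ ≤ κ ^ 2 * (1 - h * γ) ^ j)
    (hB : ‖B‖ ≤ κB)
    (hM : ∀ s k, 1 ≤ k → k ≤ l → ‖M s k‖ ≤ a * (1 - h * γ) ^ (k - 1)) :
    ∀ t i, 1 ≤ i →
      ‖Psi Qh B h M l t i‖ ≤ a * ((l : ℝ) * h * κB + 1) * κ ^ 2 * (1 - h * γ) ^ (i - 1) := by
  intro t i hi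
  set p : ℝ := 1 - h * γ with hp
  have hp0 : 0 ≤ p := by simp only [hp]; nlinarith
  have hp1 : p ≤ 1 := by simp only [hp]; nlinarith
  have hppow : ∀ n : ℕ, 0 ≤ p ^ n := fun n => pow_nonneg hp0 n
  set C : ℝ := a * κB * κ ^ 2 * p ^ (i - 1) with hC
  have hC0 : 0 ≤ C := by positivity
  -- bound on each summand
  have hterm : ∀ j ∈ Finset.range (l + 1),
      ‖(if 1 ≤ i - j ∧ i - j ≤ l then Qh ^ j * B * M (t - j) (i - j) else 0)‖ ≤
        (if 1 ≤ i - j ∧ i - j ≤ l then C else 0) := by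
    intro j hj
    rw [Finset.mem_range] at hj
    by_cases hcond : 1 ≤ i - j ∧ i - j ≤ l
    · rw [if_pos hcond, if_pos hcond]
      obtain ⟨h1, h2⟩ := hcond
      have hQj := hQ j
      have hMb := hM (t - j) (i - j) h1 h2
      have step1 : ‖Qh ^ j * B * M (t - j) (i - j)‖ ≤ ‖Qh ^ j‖ * ‖B‖ * ‖M (t - j) (i - j)‖ :=
        (norm_mul_le _ _).trans
          (mul_le_mul_of_nonneg_right (norm_mul_le _ _) (norm_nonneg _))
      have step2 : ‖Qh ^ j‖ * ‖B‖ * ‖M (t - j) (i - j)‖ ≤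
          (κ ^ 2 * p ^ j) * κB * (a * p ^ (i - j - 1)) := by
        gcongr <;> first | exact norm_nonneg _ | positivity | assumption
      have hpow : p ^ j * p ^ (i - j - 1) = p ^ (i - 1) := by
        rw [← pow_add]; congr 1; omega
      have step3 : (κ ^ 2 * p ^ j) * κB * (a * p ^ (i - j - 1)) = C := by
        rw [hC, ← hpow]; ring
      linarith [step1.trans step2]
    · rw [if_neg hcond, if_neg hcond, norm_zero]
  have hsum : ‖∑ j ∈ Finset.range (l + 1),
      (if 1 ≤ i - j ∧ i - j ≤ l then Qh ^ j * B * M (t - j) (i - j) else 0)‖ ≤ (l : ℝ) * C := by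
    calc ‖∑ j ∈ Finset.range (l + 1),
        (if 1 ≤ i - j ∧ i - j ≤ l then Qh ^ j * B * M (t - j) (i - j) else 0)‖
        ≤ ∑ j ∈ Finset.range (l + 1), ‖(if 1 ≤ i - j ∧ i - j ≤ l then
            Qh ^ j * B * M (t - j) (i - j) else 0)‖ := norm_sum_le _ _
      _ ≤ ∑ j ∈ Finset.range (l + 1), (if 1 ≤ i - j ∧ i - j ≤ l then C else 0) :=
          Finset.sum_le_sum hterm
      _ = ((Finset.range (l + 1)).filter (fun j => 1 ≤ i - j ∧ i - j ≤ l)).card • C := by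
          rw [← Finset.sum_filter, Finset.sum_const]
      _ ≤ (l : ℝ) * C := by
          rw [nsmul_eq_mul]
          have hcard : ((Finset.range (l + 1)).filter
              (fun j => 1 ≤ i - j ∧ i - j ≤ l)).card ≤ l := by
            calc ((Finset.range (l + 1)).filter (fun j => 1 ≤ i - j ∧ i - j ≤ l)).card
                ≤ (Finset.Ico (i - l) (min i (l + 1))).card := by
                  apply Finset.card_le_card
                  intro j hj
                  simp only [Finset.mem_filter, Finset.mem_range] at hj
                  simp only [Finset.mem_Ico]
                  omega
              _ ≤ l := by rw [Nat.card_Ico]; omega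
          exact mul_le_mul_of_nonneg_right (by exact_mod_cast hcard) hC0
  have hind : ‖(if i ≤ l then Qh ^ i else 0 : Matrix (Fin d) (Fin d) ℝ)‖ ≤ κ ^ 2 * p ^ (i - 1) := by
    by_cases hil : i ≤ l
    · simp only [hil, if_true]
      refine (hQ i).trans ?_
      have : p ^ i ≤ p ^ (i - 1) := pow_le_pow_of_le_one hp0 hp1 (by omega)
      nlinarith
    · simp only [hil, if_false, norm_zero]
      positivity
  have hnorm : ‖Psi Qh B h M l t i‖ ≤ κ ^ 2 * p ^ (i - 1) + h * ((l : ℝ) * C) := by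
    refine (norm_add_le _ _).trans ?_
    have : ‖h • ∑ j ∈ Finset.range (l + 1),
        (if 1 ≤ i - j ∧ i - j ≤ l then Qh ^ j * B * M (t - j) (i - j) else 0)‖ ≤
        h * ((l : ℝ) * C) := by
      rw [norm_smul, Real.norm_eq_abs, abs_of_pos hh]
      exact mul_le_mul_of_nonneg_left hsum hh.le
    linarith [hind]
  refine hnorm.trans ?_
  have hCval : C = a * κB * κ ^ 2 * p ^ (i - 1) := hC
  have hpn : 0 ≤ p ^ (i - 1) := hppow _
  rw [hCval]
  nlinarith [mul_le_mul_of_nonneg_right ha (mul_nonneg (sq_nonneg κ) hpn),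
    mul_nonneg (mul_nonneg (mul_nonneg (Nat.cast_nonneg l : (0:ℝ) ≤ l) hh.le)
      (mul_nonneg (le_trans zero_le_one ha) hκB)) (mul_nonneg (sq_nonneg κ) hpn)]
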